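/- Let 1 ≤ p < ∞ and let P be a distribution of (X,Y) on R^d × {0,1} satisfying the margin assumption MA(α, C0) with α > 0, C0 > 0. Then for any Borel function η̄: R^d → R, the classifier f̄ = 1{η̄ ≥ 1/2} satisfies R(f̄) − R(f*) ≤ C1(α, p) ‖η − η̄‖_p^{p(1+α)/(p+α)}, where ‖·‖_p denotes the L_p(R^d, P_X) norm and C1(α, p) = 2 (α+p) p^{−1} (p/α)^{α/(α+p)} C0^{(p−1)/(α+p)}. -/

import Mathlib

open MeasureTheory Metric Set
open scoped ENNReal NNReal

noncomputable section

/-- Feature space: `ℝ^d` with the Euclidean norm. -/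
abbrev Euc (d : ℕ) := EuclideanSpace ℝ (Fin d)

/-- A sample of size `n`: `n` points of `ℝ^d × {0,1}` (labels modelled by `Bool`). -/
abbrev Sample (d n : ℕ) := Fin n → Euc d × Bool

/-- Joint law of `(X,Y)` determined by the marginal `PX` and the regression
function `η(x) = P(Y = 1 | X = x)`. -/
def jointLaw {d : ℕ} (PX : Measure (Euc d)) (η : Euc d → ℝ) : Measure (Euc d × Bool) :=
  PX.bind fun x =>
    ENNReal.ofReal (η x) • Measure.dirac (x, true) +
      ENNReal.ofReal (1 - η x) • Measure.dirac (x, false)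

/-- Law `P^{⊗n}` of an i.i.d. sample of size `n`. -/
def sampleLaw {d : ℕ} (PX : Measure (Euc d)) (η : Euc d → ℝ) (n : ℕ) :
    Measure (Sample d n) :=
  Measure.pi fun _ => jointLaw PX η

/-- Misclassification risk `R(f) = P(Y ≠ f(X))` of a decision rule `f`. -/
def risk {d : ℕ} (PX : Measure (Euc d)) (η : Euc d → ℝ) (f : Euc d → Bool) : ℝ :=
  ∫ x, (if f x then 1 - η x else η x) ∂PX

/-- The Bayes rule `f*(x) = 1{η(x) ≥ 1/2}`. -/
def bayes {d : ℕ} (η : Euc d → ℝ) : Euc d → Bool := fun x => decide ((1 : ℝ) / 2 ≤ η x)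

/-- The plug-in rule `1{g ≥ 1/2}` associated with a function `g`. -/
def plugin {d : ℕ} (g : Euc d → ℝ) : Euc d → Bool := fun x => decide ((1 : ℝ) / 2 ≤ g x)

/-- Margin (low noise) assumption MA(α, C0):
`P_X(0 < |η(X) − 1/2| ≤ t) ≤ C0 t^α` for all `t > 0`. -/
def Margin {d : ℕ} (PX : Measure (Euc d)) (η : Euc d → ℝ) (α C0 : ℝ) : Prop :=
  ∀ t : ℝ, 0 < t →
    PX {x | 0 < |η x - 1 / 2| ∧ |η x - 1 / 2| ≤ t} ≤ ENNReal.ofReal (C0 * t ^ α)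

/-- Taylor polynomial of degree `N` of `g` at `x`, evaluated at `x'`. -/
def taylorPoly {d : ℕ} (g : Euc d → ℝ) (N : ℕ) (x x' : Euc d) : ℝ :=
  ∑ k ∈ Finset.range (N + 1), (k.factorial : ℝ)⁻¹ * iteratedFDeriv ℝ k g x (fun _ => x' - x)

/-- The Hölder class `Σ(β, L, ℝ^d)`: `g` is `⌊β⌋` times continuously differentiable
(`⌊β⌋` = largest integer strictly less than `β`, i.e. `⌈β⌉₊ - 1` for `β > 0`) and its
Taylor polynomial of degree `⌊β⌋` approximates it to order `L‖x − x'‖^β`. -/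
def HolderClass {d : ℕ} (β L : ℝ) (g : Euc d → ℝ) : Prop :=
  ContDiff ℝ (⌈β⌉₊ - 1 : ℕ) g ∧
    ∀ x x' : Euc d, |g x' - taylorPoly g (⌈β⌉₊ - 1) x x'| ≤ L * ‖x' - x‖ ^ β

/-- `(c0, r0)`-regularity of a set `A`:
`λ[A ∩ B(x,r)] ≥ c0 λ[B(x,r)]` for all `0 < r ≤ r0` and `x ∈ A`. -/
def Regular {d : ℕ} (c0 r0 : ℝ) (A : Set (Euc d)) : Prop :=
  ∀ x ∈ A, ∀ r : ℝ, 0 < r → r ≤ r0 →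
    ENNReal.ofReal c0 * volume (closedBall x r) ≤ volume (A ∩ closedBall x r)

/-- Strong density assumption with parameters `(c0, r0, μmin, μmax, K)`. -/
def StrongDensity {d : ℕ} (PX : Measure (Euc d)) (c0 r0 μmin μmax : ℝ)
    (K : Set (Euc d)) : Prop :=
  ∃ A : Set (Euc d), IsCompact A ∧ A ⊆ K ∧ Regular c0 r0 A ∧
    ∃ μ : Euc d → ℝ, Measurable μ ∧ (∀ x ∈ A, μmin ≤ μ x ∧ μ x ≤ μmax) ∧
      (∀ x, x ∉ A → μ x = 0) ∧
      PX = volume.withDensity fun x => ENNReal.ofReal (μ x)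

/-- Mild density assumption with parameters `(c0, r0, μmax, K)`. -/
def MildDensity {d : ℕ} (PX : Measure (Euc d)) (c0 r0 μmax : ℝ)
    (K : Set (Euc d)) : Prop :=
  ∃ A : Set (Euc d), IsCompact A ∧ A ⊆ K ∧ Regular c0 r0 A ∧
    ∃ μ : Euc d → ℝ, Measurable μ ∧ (∀ x ∈ A, 0 ≤ μ x ∧ μ x ≤ μmax) ∧
      (∀ x, x ∉ A → μ x = 0) ∧
      PX = volume.withDensity fun x => ENNReal.ofReal (μ x)

/-- The class `P_Σ(α, C0, β, L, c0, r0, μmin, μmax, K)`, a distribution being encoded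
by its marginal `PX` together with its regression function `η`. -/
def MemPS {d : ℕ} (α C0 β L c0 r0 μmin μmax : ℝ) (K : Set (Euc d))
    (PX : Measure (Euc d)) (η : Euc d → ℝ) : Prop :=
  IsProbabilityMeasure PX ∧ Measurable η ∧ (∀ x, η x ∈ Icc (0 : ℝ) 1) ∧
    Margin PX η α C0 ∧ HolderClass β L η ∧ StrongDensity PX c0 r0 μmin μmax K

/-- Topological support of a measure on `ℝ^d`. -/
def msupport {d : ℕ} (PX : Measure (Euc d)) : Set (Euc d) :=
  {x | ∀ r : ℝ, 0 < r → 0 < PX (ball x r)}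

/-- `f` hits the level `a` at `x0`. -/
def Hits {d : ℕ} (f : Euc d → ℝ) (a : ℝ) (x0 : Euc d) : Prop :=
  f x0 = a ∧ ∀ r : ℝ, 0 < r → ∃ x ∈ closedBall x0 r, f x ≠ a

/-- `f` crosses the level `a` at `x0`. -/
def Crosses {d : ℕ} (f : Euc d → ℝ) (a : ℝ) (x0 : Euc d) : Prop :=
  ∀ r : ℝ, 0 < r → (∃ x ∈ closedBall x0 r, f x < a) ∧ ∃ x ∈ closedBall x0 r, a < f x

/-- Expected excess risk `E[R(f̂_n)] − R(f*)` of a plug-in classifier built from the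
estimator `hatη` of the regression function. -/
def expExcess {d : ℕ} (PX : Measure (Euc d)) (η : Euc d → ℝ) {n : ℕ}
    (hatη : Sample d n → Euc d → ℝ) : ℝ :=
  (∫ ω, risk PX η (plugin (hatη ω)) ∂sampleLaw PX η n) - risk PX η (bayes η)

/-- Expected excess risk `E[R(f̂_n)] − R(f*)` of a (general) classifier. -/
def expExcessRule {d : ℕ} (PX : Measure (Euc d)) (η : Euc d → ℝ) {n : ℕ}
    (fhat : Sample d n → Euc d → Bool) : ℝ :=
  (∫ ω, risk PX η (fhat ω) ∂sampleLaw PX η n) - risk PX η (bayes η)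

/-- Empirical misclassification risk of the plug-in rule `1{g ≥ 1/2}` on a sample. -/
def empRisk {d n : ℕ} (ω : Sample d n) (g : Euc d → ℝ) : ℝ :=
  (n : ℝ)⁻¹ * ∑ i : Fin n, if plugin g (ω i).1 ≠ (ω i).2 then (1 : ℝ) else 0


private lemma pos_eq_of_log_eq' {a b : ℝ} (ha : 0 < a) (hb : 0 < b)
    (h : Real.log a = Real.log b) : a = b :=
  Real.log_injOn_pos (Set.mem_Ioi.2 ha) (Set.mem_Ioi.2 hb) h

private lemma real_calc' (p α C0 t : ℝ) (hp : 1 < p) (hα : 0 < α) (hC0 : 0 < C0) (ht : 0 < t) :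
    2 * t * (C0 * (((p/α) ^ (p/((p-1)*(α+p))) * C0 ^ (-(1/(α+p))) * t ^ (p/(α+p))) ^ α)) ^ ((p-1)/p)
      + 2 * (((p/α) ^ (p/((p-1)*(α+p))) * C0 ^ (-(1/(α+p))) * t ^ (p/(α+p))) ^ (1-p)) * t ^ p
    = 2 * (α + p) * p⁻¹ * (p / α) ^ (α / (α + p)) * C0 ^ ((p - 1) / (α + p))
        * t ^ (p * (1 + α) / (p + α)) := by
  have hp0 : (0:ℝ) < p := by linarith
  have hp1 : (0:ℝ) < p - 1 := by linarith
  have hαp : (0:ℝ) < α + p := by linarith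
  have hpα : (0:ℝ) < p / α := div_pos hp0 hα
  set δ : ℝ := (p/α) ^ (p/((p-1)*(α+p))) * C0 ^ (-(1/(α+p))) * t ^ (p/(α+p)) with hδ
  have hδpos : 0 < δ := by positivity
  have hlogδ : Real.log δ = (p/((p-1)*(α+p))) * Real.log (p/α)
      + (-(1/(α+p))) * Real.log C0 + (p/(α+p)) * Real.log t := by
    rw [hδ, Real.log_mul (by positivity) (by positivity),
      Real.log_mul (by positivity) (by positivity),
      Real.log_rpow hpα, Real.log_rpow hC0, Real.log_rpow ht]
  have h1 : 2 * t * (C0 * δ ^ α) ^ ((p-1)/p)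
      = 2 * (p/α) ^ (α/(α+p)) * C0 ^ ((p-1)/(α+p)) * t ^ (p*(1+α)/(p+α)) := by
    apply pos_eq_of_log_eq' (by positivity) (by positivity)
    simp (disch := positivity) only [Real.log_mul, Real.log_rpow, hlogδ]
    field_simp
    ring
  have h2 : 2 * δ ^ (1-p) * t ^ p
      = 2 * (p/α) ^ (α/(α+p) - 1) * C0 ^ ((p-1)/(α+p)) * t ^ (p*(1+α)/(p+α)) := by
    apply pos_eq_of_log_eq' (by positivity) (by positivity)
    simp (disch := positivity) only [Real.log_mul, Real.log_rpow, hlogδ]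
    field_simp
    ring
  rw [h1, h2]
  have h3 : (p/α) ^ (α/(α+p) - 1) = (p/α) ^ (α/(α+p)) * (α / p) := by
    rw [Real.rpow_sub hpα, Real.rpow_one]
    field_simp
  rw [h3]
  field_simp
  ring

/-- Lemma 5.2, inequality (5.3). Under MA(α, C0) with `α > 0`, for
any `1 ≤ p < ∞` and any Borel `η̄`, the plug-in rule `f̄ = 1{η̄ ≥ 1/2}` satisfies
`R(f̄) − R(f*) ≤ C1(α,p) ‖η − η̄‖_p^{p(1+α)/(p+α)}` with
`C1(α,p) = 2 (α+p) p⁻¹ (p/α)^{α/(α+p)} C0^{(p−1)/(α+p)}`. -/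
theorem stmt16 (d : ℕ) (p α C0 : ℝ) (hp : 1 ≤ p) (hα : 0 < α) (hC0 : 0 < C0)
    (PX : Measure (Euc d)) (η : Euc d → ℝ)
    (hP : IsProbabilityMeasure PX) (hη : Measurable η) (hη1 : ∀ x, η x ∈ Icc (0 : ℝ) 1)
    (hMA : Margin PX η α C0) (bη : Euc d → ℝ) (hbη : Measurable bη) :
    ENNReal.ofReal (risk PX η (plugin bη) - risk PX η (bayes η)) ≤
      ENNReal.ofReal
          (2 * (α + p) * p⁻¹ * (p / α) ^ (α / (α + p)) * C0 ^ ((p - 1) / (α + p))) *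
        eLpNorm (fun x => η x - bη x) (ENNReal.ofReal p) PX ^ (p * (1 + α) / (p + α)) := by
  classical
  have hp0 : (0:ℝ) < p := by linarith
  have hαp : (0:ℝ) < α + p := by linarith
  set f : Euc d → ℝ := fun x => η x - bη x with hfdef
  have hfm : Measurable f := hη.sub hbη
  set F : Euc d → ℝ≥0∞ := fun x => (‖f x‖₊ : ℝ≥0∞) with hFdef
  have hFm : Measurable F := hfm.enorm
  set N : ℝ≥0∞ := ∫⁻ x, F x ^ p ∂PX with hNdef
  have hFpm : Measurable fun x => F x ^ p := hFm.pow measurable_const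
  have hT : eLpNorm f (ENNReal.ofReal p) PX = N ^ (1/p) := by
    rw [eLpNorm_eq_lintegral_rpow_enorm_toReal (by simp [ENNReal.ofReal_eq_zero]; linarith)
      ENNReal.ofReal_ne_top, ENNReal.toReal_ofReal hp0.le]
    simp only [enorm_eq_nnnorm, hNdef, hFdef]
  -- the disagreement set
  set B : Set (Euc d) := {x | plugin bη x ≠ bayes η x} with hBdef
  have hBiff : ∀ x, x ∈ B ↔ ¬((1:ℝ)/2 ≤ bη x ↔ (1:ℝ)/2 ≤ η x) := by
    intro x
    simp [hBdef, plugin, bayes, decide_eq_decide]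
  have hBmeas : MeasurableSet B := by
    have : B = ({x | (1:ℝ)/2 ≤ bη x} \ {x | (1:ℝ)/2 ≤ η x}) ∪
        ({x | (1:ℝ)/2 ≤ η x} \ {x | (1:ℝ)/2 ≤ bη x}) := by
      ext x
      rw [hBiff x]
      simp only [Set.mem_union, Set.mem_diff, Set.mem_setOf_eq]
      tauto
    rw [this]
    exact ((measurableSet_le measurable_const hbη).diff
        (measurableSet_le measurable_const hη)).union
      ((measurableSet_le measurable_const hη).diff
        (measurableSet_le measurable_const hbη))
  have hBf : ∀ x ∈ B, |η x - 1/2| ≤ |f x| := by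
    intro x hx
    rw [hBiff x] at hx
    have hfx : f x = η x - bη x := rfl
    by_cases h1 : (1:ℝ)/2 ≤ bη x <;> by_cases h2 : (1:ℝ)/2 ≤ η x
    · exact absurd (iff_of_true h1 h2) hx
    · push_neg at h2
      rw [hfx, abs_of_nonpos (by linarith), abs_of_nonpos (by linarith)]
      linarith
    · push_neg at h1
      rw [hfx, abs_of_nonneg (by linarith), abs_of_nonneg (by linarith)]
      linarith
    · exact absurd (iff_of_false h1 h2) hx
  set Bpos : Set (Euc d) := B ∩ {x | 0 < |η x - 1/2|} with hBposdef
  have hBposmeas : MeasurableSet Bpos :=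
    hBmeas.inter (measurableSet_lt measurable_const ((hη.sub measurable_const).abs))
  -- pointwise description of the excess risk integrand
  set D : Euc d → ℝ := fun x => if x ∈ B then |2 * η x - 1| else 0 with hDdef
  have hD : (fun x => (if plugin bη x then 1 - η x else η x)
      - (if bayes η x then 1 - η x else η x)) = D := by
    funext x
    by_cases h1 : (1:ℝ)/2 ≤ bη x <;> by_cases h2 : (1:ℝ)/2 ≤ η x
    · have hxB : x ∉ B := by rw [hBiff x]; push_neg; exact iff_of_true h1 h2
      have e1 : plugin bη x = true := by simp only [plugin, decide_eq_true_eq]; exact h1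
      have e2 : bayes η x = true := by simp only [bayes, decide_eq_true_eq]; exact h2
      rw [hDdef]
      simp only [e1, e2, if_neg hxB]
      norm_num
    · have hxB : x ∈ B := by rw [hBiff x]; intro h; exact h2 (h.1 h1)
      push_neg at h2
      have e1 : plugin bη x = true := by simp only [plugin, decide_eq_true_eq]; exact h1
      have e2 : bayes η x = false := by simp only [bayes, decide_eq_false_iff_not]; exact h2.not_ge
      rw [hDdef]
      simp only [e1, e2, if_pos hxB]
      norm_num
      rw [abs_of_nonpos (by linarith)]
      ring
    · have hxB : x ∈ B := by rw [hBiff x]; intro h; exact h1 (h.2 h2)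
      push_neg at h1
      have e1 : plugin bη x = false := by simp only [plugin, decide_eq_false_iff_not]; exact h1.not_ge
      have e2 : bayes η x = true := by simp only [bayes, decide_eq_true_eq]; exact h2
      rw [hDdef]
      simp only [e1, e2, if_pos hxB]
      norm_num
      rw [abs_of_nonneg (by linarith)]
      ring
    · have hxB : x ∉ B := by rw [hBiff x]; push_neg; exact iff_of_false h1 h2
      have e1 : plugin bη x = false := by simp only [plugin, decide_eq_false_iff_not]; exact h1
      have e2 : bayes η x = false := by simp only [bayes, decide_eq_false_iff_not]; exact h2
      rw [hDdef]
      simp only [e1, e2, if_neg hxB]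
      norm_num
  -- integrability of the two risk integrands
  have hIm : ∀ g : Euc d → ℝ, Measurable g →
      Integrable (fun x => if plugin g x then 1 - η x else η x) PX := by
    intro g hg
    have hmeas : Measurable fun x => if plugin g x then 1 - η x else η x := by
      have heq : (fun x => if plugin g x then 1 - η x else η x)
          = Set.piecewise {x | (1:ℝ)/2 ≤ g x} (fun x => 1 - η x) η := by
        funext x
        by_cases h : (1:ℝ)/2 ≤ g x <;> simp [plugin, Set.piecewise, h]
      rw [heq]
      exact Measurable.piecewise (measurableSet_le measurable_const hg)
        (measurable_const.sub hη) hη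
    refine Integrable.mono' (integrable_const (1:ℝ)) hmeas.aestronglyMeasurable
      (ae_of_all _ fun x => ?_)
    rcases hη1 x with ⟨h0, h1⟩
    by_cases h : plugin g x = true
    · rw [if_pos h, Real.norm_eq_abs, abs_le]; constructor <;> linarith
    · rw [if_neg h, Real.norm_eq_abs, abs_le]; constructor <;> linarith
  have hI1 : Integrable (fun x => if plugin bη x then 1 - η x else η x) PX := hIm bη hbη
  have hI2 : Integrable (fun x => if bayes η x then 1 - η x else η x) PX := hIm η hη
  have hDint : Integrable D PX := hD ▸ hI1.sub hI2
  have hDnn : 0 ≤ᵐ[PX] D := ae_of_all _ fun x => by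
    by_cases hx : x ∈ B <;> simp [hDdef, hx, abs_nonneg]
  -- step 1: risk difference equals ∫ D
  have hriskdiff : risk PX η (plugin bη) - risk PX η (bayes η) = ∫ x, D x ∂PX := by
    rw [risk, risk, ← integral_sub hI1 hI2]
    exact congrArg (fun g => ∫ x, g x ∂PX) hD
  -- step 2: pass to lintegral
  have hstep2 : ENNReal.ofReal (risk PX η (plugin bη) - risk PX η (bayes η))
      ≤ ∫⁻ x, ENNReal.ofReal (D x) ∂PX := by
    rw [hriskdiff]
    exact (ofReal_integral_eq_lintegral_ofReal hDint hDnn).le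
  -- step 3: pointwise domination by the indicator of Bpos
  have hptwise : ∀ x, ENNReal.ofReal (D x) ≤ 2 * Bpos.indicator F x := by
    intro x
    by_cases hx : x ∈ B
    · by_cases hx0 : 0 < |η x - 1/2|
      · have hmem : x ∈ Bpos := ⟨hx, hx0⟩
        rw [Set.indicator_of_mem hmem]
        have habs : |2 * η x - 1| ≤ 2 * |f x| := by
          have h1 : |2 * η x - 1| = 2 * |η x - 1/2| := by
            rw [show 2 * η x - 1 = 2 * (η x - 1/2) by ring, abs_mul, abs_two]
          rw [h1]
          have := hBf x hx
          linarith
        calc ENNReal.ofReal (D x) = ENNReal.ofReal (|2 * η x - 1|) := by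
              rw [hDdef]; simp [hx]
          _ ≤ ENNReal.ofReal (2 * |f x|) := ENNReal.ofReal_le_ofReal habs
          _ = 2 * F x := by
              rw [ENNReal.ofReal_mul (by norm_num), hFdef]
              simp only [← Real.norm_eq_abs, ofReal_norm, enorm_eq_nnnorm]
              norm_num
      · have h0 : |η x - 1/2| = 0 := le_antisymm (not_lt.1 hx0) (abs_nonneg _)
        have hzero : D x = 0 := by
          rw [hDdef]
          simp only [hx, if_pos]
          rw [show 2 * η x - 1 = 2 * (η x - 1/2) by ring, abs_mul, h0, mul_zero]
        rw [hzero]; simp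
    · have hzero : D x = 0 := by rw [hDdef]; simp [hx]
      rw [hzero]; simp
  -- shared bound
  have hshared : ENNReal.ofReal (risk PX η (plugin bη) - risk PX η (bayes η))
      ≤ 2 * ∫⁻ x in Bpos, F x ∂PX := by
    calc ENNReal.ofReal (risk PX η (plugin bη) - risk PX η (bayes η))
        ≤ ∫⁻ x, ENNReal.ofReal (D x) ∂PX := hstep2
      _ ≤ ∫⁻ x, 2 * Bpos.indicator F x ∂PX := lintegral_mono hptwise
      _ = 2 * ∫⁻ x, Bpos.indicator F x ∂PX :=
          lintegral_const_mul' 2 _ (by norm_num)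
      _ = 2 * ∫⁻ x in Bpos, F x ∂PX := by rw [lintegral_indicator hBposmeas]
  -- main case split
  rcases hp.eq_or_lt with hp1 | hp1
  · -- p = 1
    subst hp1
    have hN1 : N = ∫⁻ x, F x ∂PX := by
      rw [hNdef]; congr 1; funext x; rw [ENNReal.rpow_one]
    have hbound : ENNReal.ofReal (risk PX η (plugin bη) - risk PX η (bayes η)) ≤ 2 * N := by
      refine hshared.trans ?_
      rw [hN1]
      exact mul_le_mul_right (setLIntegral_le_lintegral _ _) 2
    rw [hT]
    rw [show (1:ℝ) * (1 + α) / (1 + α) = 1 by field_simp, ENNReal.rpow_one,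
      show (1:ℝ)/1 = 1 by norm_num, ENNReal.rpow_one]
    refine hbound.trans (mul_le_mul_left ?_ N)
    have h2le : (2:ℝ) ≤ 2 * (α + 1) * 1⁻¹ * (1 / α) ^ (α / (α + 1)) * C0 ^ ((1 - 1) / (α + 1)) := by
      rw [show ((1:ℝ) - 1) / (α + 1) = 0 by ring, Real.rpow_zero, inv_one, mul_one, mul_one]
      have hα1 : α ^ (α / (α + 1)) ≤ α + 1 := by
        rcases le_or_gt α 1 with h | h
        · calc α ^ (α / (α + 1)) ≤ 1 := Real.rpow_le_one hα.le h (by positivity)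
            _ ≤ α + 1 := by linarith
        · calc α ^ (α / (α + 1)) ≤ α ^ (1:ℝ) :=
              Real.rpow_le_rpow_of_exponent_le h.le (by rw [div_le_one (by linarith)]; linarith)
            _ = α := Real.rpow_one α
            _ ≤ α + 1 := by linarith
      have hinv : ((1:ℝ) / α) ^ (α / (α + 1)) = (α ^ (α / (α + 1)))⁻¹ := by
        rw [one_div, ← Real.rpow_neg_one α, ← Real.rpow_mul hα.le, neg_one_mul,
          Real.rpow_neg hα.le]
      rw [hinv]
      have hpow_pos : 0 < α ^ (α / (α + 1)) := Real.rpow_pos_of_pos hα _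
      calc (2:ℝ) = 2 * (α ^ (α / (α + 1)) * (α ^ (α / (α + 1)))⁻¹) := by
            rw [mul_inv_cancel₀ hpow_pos.ne', mul_one]
        _ = 2 * α ^ (α / (α + 1)) * (α ^ (α / (α + 1)))⁻¹ := by ring
        _ ≤ 2 * (α + 1) * (α ^ (α / (α + 1)))⁻¹ :=
            mul_le_mul_of_nonneg_right (by linarith) (inv_nonneg.2 hpow_pos.le)
    calc (2:ℝ≥0∞) = ENNReal.ofReal 2 := by simp
      _ ≤ ENNReal.ofReal (2 * (α + 1) * 1⁻¹ * (1 / α) ^ (α / (α + 1)) * C0 ^ ((1 - 1) / (α + 1))) :=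
          ENNReal.ofReal_le_ofReal h2le
  · -- p > 1
    have hp1' : (0:ℝ) < p - 1 := by linarith
    have hC1pos : 0 < 2 * (α + p) * p⁻¹ * (p / α) ^ (α / (α + p)) * C0 ^ ((p - 1) / (α + p)) := by
      positivity
    rcases eq_or_ne N ⊤ with hNtop | hNtop
    · -- N = ∞ : RHS is ∞
      have hTtop : eLpNorm f (ENNReal.ofReal p) PX = ⊤ := by
        rw [hT, hNtop]
        exact ENNReal.top_rpow_of_pos (by positivity)
      rw [hTtop, ENNReal.top_rpow_of_pos (by positivity), ENNReal.mul_top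
        (by simp only [ne_eq, ENNReal.ofReal_eq_zero, not_le]; linarith [hC1pos])]
      exact le_top
    rcases eq_or_ne N 0 with hN0 | hN0
    · -- N = 0 : LHS is 0
      have hFae : ∀ᵐ x ∂PX, F x ^ p = 0 := (lintegral_eq_zero_iff hFpm).1 (hNdef ▸ hN0)
      have hFae' : F =ᵐ[PX] 0 := by
        filter_upwards [hFae] with x hx
        rcases ENNReal.rpow_eq_zero_iff.1 hx with ⟨h, _⟩ | ⟨_, hc⟩
        · exact h
        · exact absurd hc (by linarith)
      have hzero : (∫⁻ x in Bpos, F x ∂PX) = 0 := by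
        have h2 : (∫⁻ x, F x ∂PX) = 0 := by
          rw [lintegral_congr_ae hFae']
          simp
        exact le_antisymm (le_trans (setLIntegral_le_lintegral _ _) h2.le) zero_le
      refine le_trans hshared ?_
      rw [hzero, mul_zero]
      exact zero_le
    -- main case : 0 < N < ∞
    have hTne0 : N ^ (1/p) ≠ 0 := by
      simp only [ne_eq, ENNReal.rpow_eq_zero_iff, not_or, not_and]
      exact ⟨fun h => absurd h hN0, fun h => absurd h hNtop⟩
    have hTnetop : N ^ (1/p) ≠ ⊤ := ENNReal.rpow_ne_top_of_nonneg (by positivity) hNtop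
    set t : ℝ := (N ^ (1/p)).toReal with htdef
    have ht0 : 0 < t := ENNReal.toReal_pos hTne0 hTnetop
    have hTt : N ^ (1/p) = ENNReal.ofReal t := (ENNReal.ofReal_toReal hTnetop).symm
    have hNt : N = ENNReal.ofReal (t ^ p) := by
      have h1 : N = (N ^ (1/p)) ^ p := by
        rw [← ENNReal.rpow_mul, one_div, inv_mul_cancel₀ (ne_of_gt hp0), ENNReal.rpow_one]
      rw [h1, hTt, ENNReal.ofReal_rpow_of_pos ht0]
    -- choose δ
    set δ : ℝ := (p/α) ^ (p/((p-1)*(α+p))) * C0 ^ (-(1/(α+p))) * t ^ (p/(α+p)) with hδdef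
    have hδpos : 0 < δ := by positivity
    -- split Bpos
    set S1 : Set (Euc d) := Bpos ∩ {x | |η x - 1/2| ≤ δ} with hS1def
    set S2 : Set (Euc d) := Bpos ∩ {x | δ < |η x - 1/2|} with hS2def
    have habs_meas : Measurable fun x => |η x - 1/2| := (hη.sub measurable_const).abs
    have hS1meas : MeasurableSet S1 := hBposmeas.inter (measurableSet_le habs_meas measurable_const)
    have hS2meas : MeasurableSet S2 := hBposmeas.inter (measurableSet_lt measurable_const habs_meas)
    have hsplit : (∫⁻ x in Bpos, F x ∂PX) = (∫⁻ x in S1, F x ∂PX) + ∫⁻ x in S2, F x ∂PX := by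
      have hunion : Bpos = S1 ∪ S2 := by
        ext x
        simp only [hS1def, hS2def, Set.mem_union, Set.mem_inter_iff, Set.mem_setOf_eq]
        constructor
        · intro hx
          rcases le_or_gt (|η x - 1/2|) δ with h | h
          · exact Or.inl ⟨hx, h⟩
          · exact Or.inr ⟨hx, h⟩
        · rintro (⟨hx, _⟩ | ⟨hx, _⟩) <;> exact hx
      have hdisj : Disjoint S1 S2 := by
        rw [Set.disjoint_iff]
        rintro x ⟨⟨_, h1⟩, ⟨_, h2⟩⟩
        simp only [Set.mem_setOf_eq] at h1 h2
        exact absurd h1 (not_le.2 h2)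
      rw [hunion, lintegral_union hS2meas hdisj]
    -- part 1 : Hölder
    have hq : p.HolderConjugate (p/(p-1)) := Real.HolderConjugate.conjExponent hp1
    have hpart1 : (∫⁻ x in S1, F x ∂PX) ≤ N ^ (1/p) *
        (ENNReal.ofReal (C0 * δ ^ α)) ^ ((p-1)/p) := by
      have h1 : (∫⁻ x in S1, F x ∂PX)
          = ∫⁻ x, (F * S1.indicator fun _ => (1:ℝ≥0∞)) x ∂PX := by
        rw [← lintegral_indicator hS1meas]
        refine lintegral_congr fun x => ?_
        by_cases hx : x ∈ S1
        · simp [hx]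
        · simp [hx]
      rw [h1]
      have h2 := ENNReal.lintegral_mul_le_Lp_mul_Lq PX hq hFm.aemeasurable
        ((measurable_const.indicator hS1meas).aemeasurable :
          AEMeasurable (S1.indicator fun _ => (1:ℝ≥0∞)) PX)
      refine h2.trans ?_
      have h3 : (∫⁻ x, (S1.indicator (fun _ => (1:ℝ≥0∞)) x) ^ (p/(p-1)) ∂PX) = PX S1 := by
        have hptw : ∀ x, (S1.indicator (fun _ => (1:ℝ≥0∞)) x) ^ (p/(p-1))
            = S1.indicator (fun _ => (1:ℝ≥0∞)) x := by
          intro x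
          by_cases hx : x ∈ S1
          · simp [hx]
          · simp [hx, ENNReal.zero_rpow_of_pos (by positivity : (0:ℝ) < p/(p-1))]
        rw [lintegral_congr hptw, lintegral_indicator hS1meas]
        simp
      rw [h3]
      refine mul_le_mul_right ?_ _
      have hmargin : PX S1 ≤ ENNReal.ofReal (C0 * δ ^ α) := by
        refine le_trans (measure_mono ?_) (hMA δ hδpos)
        rintro x ⟨⟨_, h0⟩, hle⟩
        exact ⟨h0, hle⟩
      calc (PX S1) ^ (1/(p/(p-1))) ≤ (ENNReal.ofReal (C0 * δ ^ α)) ^ (1/(p/(p-1))) :=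
            ENNReal.rpow_le_rpow hmargin (by positivity)
        _ = (ENNReal.ofReal (C0 * δ ^ α)) ^ ((p-1)/p) := by
            rw [one_div, inv_div]
    -- part 2 : Markov-type bound
    have hδrpow_ne_top : (ENNReal.ofReal δ) ^ (1-p) ≠ ⊤ := by
      rw [show (1:ℝ)-p = -(p-1) by ring, ENNReal.rpow_neg]
      exact ENNReal.inv_ne_top.2 (ENNReal.rpow_pos (ENNReal.ofReal_pos.2 hδpos)
        ENNReal.ofReal_ne_top).ne'
    have hpart2 : (∫⁻ x in S2, F x ∂PX) ≤ (ENNReal.ofReal δ) ^ (1-p) * N := by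
      have hpt : ∀ x ∈ S2, F x ≤ (ENNReal.ofReal δ) ^ (1-p) * F x ^ p := by
        rintro x ⟨⟨hxB, _⟩, hδlt⟩
        have h1 : δ < |f x| := lt_of_lt_of_le hδlt (hBf x hxB)
        have hfx : ENNReal.ofReal δ < F x := by
          have h2 : ENNReal.ofReal δ < ENNReal.ofReal (|f x|) :=
            (ENNReal.ofReal_lt_ofReal_iff (hδpos.trans h1)).2 h1
          calc ENNReal.ofReal δ < ENNReal.ofReal (|f x|) := h2
            _ = F x := by
              rw [hFdef, ← Real.norm_eq_abs, ofReal_norm, enorm_eq_nnnorm]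
        have hF0 : F x ≠ 0 := fun h => by simp [h] at hfx
        have hFtop : F x ≠ ⊤ := ENNReal.coe_ne_top
        have key1 : F x = F x ^ p * F x ^ (1-p) := by
          rw [← ENNReal.rpow_add _ _ hF0 hFtop]
          norm_num
        have key2 : F x ^ (1-p) ≤ (ENNReal.ofReal δ) ^ (1-p) := by
          rw [show (1:ℝ)-p = -(p-1) by ring, ENNReal.rpow_neg, ENNReal.rpow_neg]
          exact ENNReal.inv_le_inv.2 (ENNReal.rpow_le_rpow hfx.le hp1'.le)
        nth_rewrite 1 [key1]
        rw [mul_comm ((ENNReal.ofReal δ) ^ (1-p)) (F x ^ p)]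
        exact mul_le_mul_right key2 _
      calc (∫⁻ x in S2, F x ∂PX)
          ≤ ∫⁻ x in S2, (ENNReal.ofReal δ) ^ (1-p) * F x ^ p ∂PX :=
            setLIntegral_mono (measurable_const.mul hFpm) hpt
        _ ≤ ∫⁻ x, (ENNReal.ofReal δ) ^ (1-p) * F x ^ p ∂PX := setLIntegral_le_lintegral _ _
        _ = (ENNReal.ofReal δ) ^ (1-p) * N := lintegral_const_mul' _ _ hδrpow_ne_top
    -- assemble
    have hassemble : ENNReal.ofReal (risk PX η (plugin bη) - risk PX η (bayes η))
        ≤ ENNReal.ofReal (2 * t * (C0 * δ ^ α) ^ ((p-1)/p) + 2 * δ ^ (1-p) * t ^ p) := by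
      refine hshared.trans ?_
      rw [hsplit]
      calc 2 * ((∫⁻ x in S1, F x ∂PX) + ∫⁻ x in S2, F x ∂PX)
          ≤ 2 * (N ^ (1/p) * (ENNReal.ofReal (C0 * δ ^ α)) ^ ((p-1)/p)
              + (ENNReal.ofReal δ) ^ (1-p) * N) :=
            mul_le_mul_right (add_le_add hpart1 hpart2) 2
        _ = ENNReal.ofReal (2 * t * (C0 * δ ^ α) ^ ((p-1)/p) + 2 * δ ^ (1-p) * t ^ p) := by
            rw [hTt, hNt, ENNReal.ofReal_rpow_of_pos (by positivity : 0 < C0 * δ ^ α),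
              ENNReal.ofReal_rpow_of_pos hδpos,
              ← ENNReal.ofReal_mul (by positivity : (0:ℝ) ≤ t),
              ← ENNReal.ofReal_mul (by positivity : (0:ℝ) ≤ δ ^ (1-p)),
              ← ENNReal.ofReal_add (by positivity) (by positivity),
              show (2:ℝ≥0∞) = ENNReal.ofReal 2 by simp,
              ← ENNReal.ofReal_mul (by norm_num : (0:ℝ) ≤ 2)]
            congr 1
            ring
    have hcalc := real_calc' p α C0 t hp1 hα hC0 ht0
    rw [← hδdef] at hcalc
    rw [hT, hTt, ENNReal.ofReal_rpow_of_pos ht0, ← ENNReal.ofReal_mul hC1pos.le]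
    refine hassemble.trans (ENNReal.ofReal_le_ofReal ?_)
    rw [hcalc]

end
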